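/- For m ≥ 0, removing any single m-dimensional subcube from Q_{m+2} leaves a connected graph of diameter at most m+2, and since the number of antipodal pairs 2^{m+1} exceeds the number 2^m of removed vertices, the diameter of the remaining graph is exactly m+2. Hence the Q_m-subcube fault diameter of Q_{m+2} is m+2. -/

import Mathlib

open SimpleGraph

/-- The `n`-dimensional hypercube: vertices are `Fin n → Bool`,
adjacent iff Hamming distance is `1`. -/
def Q (n : ℕ) : SimpleGraph (Fin n → Bool) where
  Adj u v := hammingDist u v = 1
  symm := ⟨fun u v (h : hammingDist u v = 1) => (hammingDist_comm v u).trans h⟩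
  loopless := ⟨fun u (h : hammingDist u u = 1) => by simp [hammingDist_self] at h⟩

/-- Flip the `i`-th bit of `x`. -/
def flipBit {n : ℕ} (x : Fin n → Bool) (i : Fin n) : Fin n → Bool :=
  Function.update x i (!x i)

/-- `S` is a subcube of dimension exactly `m` (fixing `n - m` coordinates). -/
def IsSubcube {n : ℕ} (m : ℕ) (S : Set (Fin n → Bool)) : Prop :=
  ∃ A : Finset (Fin n), A.card = n - m ∧ ∃ p : Fin n → Bool,
    S = {x | ∀ i ∈ A, x i = p i}

/-- `S` is a subcube of dimension at most `m` (fixing at least `n - m` coordinates). -/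
def IsSubcubeLe {n : ℕ} (m : ℕ) (S : Set (Fin n → Bool)) : Prop :=
  ∃ A : Finset (Fin n), n - m ≤ A.card ∧ ∃ p : Fin n → Bool,
    S = {x | ∀ i ∈ A, x i = p i}

/-! ### Auxiliary lemmas -/

lemma adj_of_single {n : ℕ} (x y : Fin n → Bool) (i : Fin n) (hi : x i ≠ y i)
    (h : ∀ j, j ≠ i → x j = y j) : (Q n).Adj x y := by
  show hammingDist x y = 1
  rw [hammingDist]
  convert Finset.card_singleton i
  ext j
  simp only [Finset.mem_filter, Finset.mem_univ, true_and, Finset.mem_singleton]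
  constructor
  · intro hj; by_contra hji; exact hj (h j hji)
  · rintro rfl; exact hi

lemma ham_update {n : ℕ} (x y : Fin n → Bool) (i : Fin n) (hi : x i ≠ y i) :
    hammingDist (Function.update x i (y i)) y + 1 = hammingDist x y := by
  classical
  have hset : (Finset.univ.filter fun j => Function.update x i (y i) j ≠ y j)
      = (Finset.univ.filter fun j => x j ≠ y j).erase i := by
    ext j
    simp only [Finset.mem_filter, Finset.mem_univ, true_and, Finset.mem_erase]
    by_cases hj : j = i
    · subst hj; simp [Function.update_self]
    · rw [Function.update_of_ne hj]; tauto
  have hmem : i ∈ Finset.univ.filter fun j => x j ≠ y j := by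
    simp [hi]
  show (Finset.univ.filter fun j => Function.update x i (y i) j ≠ y j).card + 1
      = (Finset.univ.filter fun j => x j ≠ y j).card
  rw [hset, Finset.card_erase_add_one hmem]

lemma ham_le_length {n : ℕ} (S : Set (Fin n → Bool)) {u v : ↥Sᶜ}
    (w : ((Q n).induce Sᶜ).Walk u v) : hammingDist u.1 v.1 ≤ w.length := by
  induction w with
  | nil => simp [hammingDist_self]
  | @cons a b c h w ih =>
    have hab : hammingDist a.1 b.1 = 1 := h
    calc hammingDist a.1 c.1 ≤ hammingDist a.1 b.1 + hammingDist b.1 c.1 :=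
          hammingDist_triangle _ _ _
      _ ≤ 1 + w.length := by rw [hab]; omega
      _ = (SimpleGraph.Walk.cons h w).length := by simp [SimpleGraph.Walk.length_cons]; omega

lemma walk_free {n : ℕ} (A : Finset (Fin n)) (p : Fin n → Bool)
    (S : Set (Fin n → Bool)) (hs : S = {x | ∀ i ∈ A, x i = p i}) :
    ∀ (k : ℕ) (x y : Fin n → Bool) (hx : x ∈ Sᶜ) (hy : y ∈ Sᶜ),
      hammingDist x y = k → (∀ i ∈ A, x i = y i) →
      ∃ w : ((Q n).induce Sᶜ).Walk ⟨x, hx⟩ ⟨y, hy⟩, w.length = k := by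
  intro k
  induction k with
  | zero =>
    intro x y hx hy hd _
    have hxy : x = y := hammingDist_eq_zero.mp hd
    subst hxy
    exact ⟨SimpleGraph.Walk.nil, rfl⟩
  | succ k ih =>
    intro x y hx hy hd hA
    have hxy : x ≠ y := by
      intro h; subst h; simp [hammingDist_self] at hd
    obtain ⟨i, hi⟩ : ∃ i, x i ≠ y i := by
      by_contra h; push_neg at h; exact hxy (funext h)
    have hiA : i ∉ A := fun h => hi (hA i h)
    set x' := Function.update x i (y i) with hx'def
    have hx'c : x' ∈ Sᶜ := by
      intro hmem
      apply hx
      rw [hs] at hmem ⊢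
      intro j hj
      have hji : j ≠ i := fun h => hiA (h ▸ hj)
      have := hmem j hj
      rwa [hx'def, Function.update_of_ne hji] at this
    have hadj : (Q n).Adj x x' := by
      apply adj_of_single x x' i
      · rw [hx'def, Function.update_self]; exact hi
      · intro j hj; rw [hx'def, Function.update_of_ne hj]
    have hd' : hammingDist x' y = k := by
      have h2 := ham_update x y i hi
      rw [← hx'def] at h2
      omega
    have hA' : ∀ j ∈ A, x' j = y j := by
      intro j hj
      have hji : j ≠ i := fun h => hiA (h ▸ hj)
      rw [hx'def, Function.update_of_ne hji]
      exact hA j hj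
    obtain ⟨w, hw⟩ := ih x' y hx'c hy hd' hA'
    refine ⟨SimpleGraph.Walk.cons (SimpleGraph.induce_adj.mpr hadj) w, ?_⟩
    simp [SimpleGraph.Walk.length_cons, hw]

lemma walk_ab {n : ℕ} (a b : Fin n) (hab : a ≠ b) (p : Fin n → Bool)
    (S : Set (Fin n → Bool)) (hs : S = {x | ∀ i ∈ ({a, b} : Finset (Fin n)), x i = p i})
    (z y : Fin n → Bool) (hz : z ∈ Sᶜ) (hy : y ∈ Sᶜ)
    (hagree : ∀ j, j ≠ a → j ≠ b → z j = y j) :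
    ∃ w : ((Q n).induce Sᶜ).Walk ⟨z, hz⟩ ⟨y, hy⟩, w.length ≤ 2 := by
  have hmem : ∀ x : Fin n → Bool, x ∈ S ↔ (x a = p a ∧ x b = p b) := by
    intro x; rw [hs]; simp [Set.mem_setOf_eq]
  by_cases ha : z a = y a
  · by_cases hb : z b = y b
    · -- z = y
      have hzy : z = y := by
        funext j
        by_cases hja : j = a
        · subst hja; exact ha
        · by_cases hjb : j = b
          · subst hjb; exact hb
          · exact hagree j hja hjb
      subst hzy
      exact ⟨SimpleGraph.Walk.nil, by norm_num⟩
    · -- differ only at b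
      have hadj : (Q n).Adj z y := by
        apply adj_of_single z y b hb
        intro j hj
        by_cases hja : j = a
        · subst hja; exact ha
        · exact hagree j hja hj
      exact ⟨SimpleGraph.Walk.cons (SimpleGraph.induce_adj.mpr hadj) SimpleGraph.Walk.nil, by simp⟩
  · by_cases hb : z b = y b
    · -- differ only at a
      have hadj : (Q n).Adj z y := by
        apply adj_of_single z y a ha
        intro j hj
        by_cases hjb : j = b
        · subst hjb; exact hb
        · exact hagree j hj hjb
      exact ⟨SimpleGraph.Walk.cons (SimpleGraph.induce_adj.mpr hadj) SimpleGraph.Walk.nil, by simp⟩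
    · -- differ at both a and b
      by_cases hm : Function.update z a (y a) ∈ S
      · -- use mid2 = update z b (y b)
        have hya : y a = p a := by
          have := (hmem _).mp hm
          rw [Function.update_self] at this
          exact this.1
        have hzb : z b = p b := by
          have := (hmem _).mp hm
          rw [Function.update_of_ne (Ne.symm hab)] at this
          exact this.2
        have hza : z a ≠ p a := by
          intro h
          exact hz ((hmem z).mpr ⟨h, hzb⟩)
        set mid := Function.update z b (y b) with hmid
        have hmc : mid ∈ Sᶜ := by
          intro hmS
          have := (hmem mid).mp hmS
          rw [hmid, Function.update_of_ne hab] at this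
          exact hza this.1
        have hadj1 : (Q n).Adj z mid := by
          apply adj_of_single z mid b
          · rw [hmid, Function.update_self]; exact hb
          · intro j hj; rw [hmid, Function.update_of_ne hj]
        have hadj2 : (Q n).Adj mid y := by
          apply adj_of_single mid y a
          · rw [hmid, Function.update_of_ne hab]; exact ha
          · intro j hj
            by_cases hjb : j = b
            · subst hjb; rw [hmid, Function.update_self]
            · rw [hmid, Function.update_of_ne hjb]; exact hagree j hj hjb
        refine ⟨SimpleGraph.Walk.cons (u := (⟨z, hz⟩ : ↥Sᶜ)) (v := ⟨mid, hmc⟩)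
          (SimpleGraph.induce_adj.mpr hadj1) (SimpleGraph.Walk.cons (SimpleGraph.induce_adj.mpr hadj2) SimpleGraph.Walk.nil), by simp⟩
      · -- use mid1 = update z a (y a)
        set mid := Function.update z a (y a) with hmid
        have hmc : mid ∈ Sᶜ := hm
        have hadj1 : (Q n).Adj z mid := by
          apply adj_of_single z mid a
          · rw [hmid, Function.update_self]; exact ha
          · intro j hj; rw [hmid, Function.update_of_ne hj]
        have hadj2 : (Q n).Adj mid y := by
          apply adj_of_single mid y b
          · rw [hmid, Function.update_of_ne (Ne.symm hab)]; exact hb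
          · intro j hj
            by_cases hja : j = a
            · subst hja; rw [hmid, Function.update_self]
            · rw [hmid, Function.update_of_ne hja]; exact hagree j hja hj
        refine ⟨SimpleGraph.Walk.cons (u := (⟨z, hz⟩ : ↥Sᶜ)) (v := ⟨mid, hmc⟩)
          (SimpleGraph.induce_adj.mpr hadj1) (SimpleGraph.Walk.cons (SimpleGraph.induce_adj.mpr hadj2) SimpleGraph.Walk.nil), by simp⟩

theorem subcube_fault_diameter_mplus2 (m : ℕ) (S : Set (Fin (m + 2) → Bool))
    (hS : IsSubcube m S) :
    ((Q (m + 2)).induce Sᶜ).Connected ∧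
    (∀ x y, ((Q (m + 2)).induce Sᶜ).dist x y ≤ m + 2) ∧
    ∃ x y, ((Q (m + 2)).induce Sᶜ).dist x y = m + 2 := by
  classical
  obtain ⟨A, hcard, p, hs⟩ := hS
  have hcard2 : A.card = 2 := by omega
  obtain ⟨a, b, hab, rfl⟩ := Finset.card_eq_two.mp hcard2
  have hmem : ∀ x : Fin (m + 2) → Bool, x ∈ S ↔ (x a = p a ∧ x b = p b) := by
    intro x; rw [hs]; simp [Set.mem_setOf_eq]
  -- key: any two vertices joined by a walk of length ≤ m + 2
  have key : ∀ (x y : ↥Sᶜ), ∃ w : ((Q (m + 2)).induce Sᶜ).Walk x y, w.length ≤ m + 2 := by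
    rintro ⟨x, hx⟩ ⟨y, hy⟩
    set z : Fin (m + 2) → Bool := fun j => if j = a then x j else if j = b then x j else y j
      with hzdef
    have hza : z a = x a := by simp [hzdef]
    have hzb : z b = x b := by simp [hzdef, hab]
    have hzoff : ∀ j, j ≠ a → j ≠ b → z j = y j := by
      intro j hja hjb; simp [hzdef, hja, hjb]
    have hzc : z ∈ Sᶜ := by
      intro hzS
      have h1 := (hmem z).mp hzS
      exact hx ((hmem x).mpr ⟨hza ▸ h1.1, hzb ▸ h1.2⟩)
    -- phase 1 : x to z
    have hAagree : ∀ i ∈ ({a, b} : Finset (Fin (m + 2))), x i = z i := by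
      intro i hi
      rcases Finset.mem_insert.mp hi with h | h
      · subst h; exact hza.symm
      · rw [Finset.mem_singleton] at h; subst h; exact hzb.symm
    obtain ⟨w1, hw1⟩ := walk_free ({a, b} : Finset (Fin (m + 2))) p S hs
      (hammingDist x z) x z hx hzc rfl hAagree
    -- bound on hammingDist x z
    have hbound : hammingDist x z ≤ m := by
      have hsub : (Finset.univ.filter fun j => x j ≠ z j)
          ⊆ Finset.univ \ ({a, b} : Finset (Fin (m + 2))) := by
        intro j hj
        simp only [Finset.mem_filter, Finset.mem_univ, true_and] at hj
        simp only [Finset.mem_sdiff, Finset.mem_univ, true_and, Finset.mem_insert,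
          Finset.mem_singleton]
        push_neg
        constructor
        · intro h; subst h; exact hj hza.symm
        · intro h; subst h; exact hj hzb.symm
      have := Finset.card_le_card hsub
      have hcardsd : (Finset.univ \ ({a, b} : Finset (Fin (m + 2)))).card = m := by
        rw [Finset.card_sdiff_of_subset (Finset.subset_univ _), Finset.card_univ, Fintype.card_fin,
          Finset.card_pair hab]
        omega
      calc hammingDist x z = (Finset.univ.filter fun j => x j ≠ z j).card := rfl
        _ ≤ (Finset.univ \ ({a, b} : Finset (Fin (m + 2)))).card := this
        _ = m := hcardsd
    -- phase 2 : z to y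
    obtain ⟨w2, hw2⟩ := walk_ab a b hab p S hs z y hzc hy hzoff
    refine ⟨w1.append w2, ?_⟩
    rw [SimpleGraph.Walk.length_append, hw1]
    omega
  refine ⟨?_, ?_, ?_⟩
  · -- Connected
    rw [SimpleGraph.connected_iff]
    constructor
    · intro u v
      obtain ⟨w, _⟩ := key u v
      exact ⟨w⟩
    · refine ⟨⟨Function.update p a (!p a), ?_⟩⟩
      intro hmemS
      have := ((hmem _).mp hmemS).1
      rw [Function.update_self] at this
      simp at this
  · -- diameter bound
    intro x y
    obtain ⟨w, hw⟩ := key x y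
    exact le_trans (SimpleGraph.dist_le w) hw
  · -- pair at distance exactly m + 2
    set x : Fin (m + 2) → Bool := fun j => if j = a then !p j else p j with hxdef
    set y : Fin (m + 2) → Bool := fun j => !x j with hydef
    have hx : x ∈ Sᶜ := by
      intro hxS
      have := ((hmem x).mp hxS).1
      simp [hxdef] at this
    have hy : y ∈ Sᶜ := by
      intro hyS
      have := ((hmem y).mp hyS).2
      simp [hydef, hxdef, hab.symm] at this
    have hham : hammingDist x y = m + 2 := by
      have : (Finset.univ.filter fun j => x j ≠ y j) = Finset.univ := by
        ext j; simp [hydef]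
      calc hammingDist x y = (Finset.univ.filter fun j => x j ≠ y j).card := rfl
        _ = (Finset.univ : Finset (Fin (m + 2))).card := by rw [this]
        _ = m + 2 := by rw [Finset.card_univ, Fintype.card_fin]
    refine ⟨⟨x, hx⟩, ⟨y, hy⟩, le_antisymm ?_ ?_⟩
    · obtain ⟨w, hw⟩ := key ⟨x, hx⟩ ⟨y, hy⟩
      exact le_trans (SimpleGraph.dist_le w) hw
    · obtain ⟨w, hw⟩ := key ⟨x, hx⟩ ⟨y, hy⟩
      have hreach : ((Q (m + 2)).induce Sᶜ).Reachable ⟨x, hx⟩ ⟨y, hy⟩ := ⟨w⟩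
      obtain ⟨w', hw'⟩ := hreach.exists_walk_length_eq_dist
      calc m + 2 = hammingDist x y := hham.symm
        _ ≤ w'.length := ham_le_length S w'
        _ = _ := hw'
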